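/- Deterministic evaluation-error bound (core of Lemma B.6). In the finite episodic MDP setting with true transitions P, fix a second collection of kernels P̂ on the same (𝒮,𝒜,H), reals δ > 0, C ≥ 0, B ≥ 0, and distributions μ_h ∈ Δ(𝒮×𝒜) for h ∈ {1,…,H}. Assume: (i) for every h and every (s,a) with sup_{π'} d_h^{π'}(s,a) ≥ δ (occupancies under the true P), one has sup_{π'} d_h^{π'}(s,a) ≤ C·μ_h(s,a); (ii) for every h and every function G : 𝒮 → [0,H], Σ_{(s,a)} μ_h(s,a)·(Σ_{s'} (P̂_h(s'|s,a) − P_h(s'|s,a)) G(s'))² ≤ B. Then for every policy π and every reward function r with r_h(s,a) ∈ [0,1]: |Ĵ(π;r) − J(π;r)| ≤ H·√(C·B) + S·A·H²·δ, where J, Ĵ are the returns of π under P and P̂ respectively. -/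

import Mathlib

open Finset

/-- A (non-stationary) policy for a finite episodic MDP. -/
structure EpiPolicy (S A : Type) [Fintype A] where
  p : S → ℕ → A → ℝ
  nonneg : ∀ s h a, 0 ≤ p s h a
  sum_one : ∀ s h, ∑ a, p s h a = 1

/-- Step-`h` state-action occupancy measure (0-indexed: `occ P μ π h` is `d_{h+1}^π`). -/
noncomputable def occ {S A : Type} [Fintype S] [Fintype A]
    (P : ℕ → S → A → S → ℝ) (μ : S → ℝ) (π : EpiPolicy S A) : ℕ → S × A → ℝ
  | 0 => fun q => μ q.1 * π.p q.1 0 q.2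
  | h + 1 => fun q =>
      ∑ q' : S × A, occ P μ π h q' * P h q'.1 q'.2 q.1 * π.p q.1 (h + 1) q.2

/-- `valAux P r π k h s`: value of `π` at state `s` and (0-indexed) step `h` with `k`
steps remaining; the return of a horizon-`H` MDP is `∑ s, μ s * valAux P r π H 0 s`. -/
noncomputable def valAux {S A : Type} [Fintype S] [Fintype A]
    (P : ℕ → S → A → S → ℝ) (r : ℕ → S → A → ℝ) (π : EpiPolicy S A) :
    ℕ → ℕ → S → ℝ
  | 0, _, _ => 0
  | k + 1, h, s =>
      ∑ a, π.p s h a * (r h s a + ∑ s', P h s a s' * valAux P r π k (h + 1) s')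

section Aux

variable {S A : Type} [Fintype S] [Fintype A]

lemma valAux_nonneg (P : ℕ → S → A → S → ℝ) (r : ℕ → S → A → ℝ) (π : EpiPolicy S A)
    (hP : ∀ h s a s', 0 ≤ P h s a s') (hr : ∀ h s a, 0 ≤ r h s a) :
    ∀ k h s, 0 ≤ valAux P r π k h s := by
  intro k
  induction k with
  | zero => intro h s; simp [valAux]
  | succ k ih =>
    intro h s
    rw [valAux]
    refine Finset.sum_nonneg fun a _ => mul_nonneg (π.nonneg _ _ _) ?_
    exact add_nonneg (hr _ _ _)
      (Finset.sum_nonneg fun s' _ => mul_nonneg (hP _ _ _ _) (ih _ _))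

lemma valAux_le (P : ℕ → S → A → S → ℝ) (r : ℕ → S → A → ℝ) (π : EpiPolicy S A)
    (hP : ∀ h s a, (∀ s', 0 ≤ P h s a s') ∧ ∑ s', P h s a s' = 1)
    (hr : ∀ h s a, r h s a ≤ 1) :
    ∀ k h s, valAux P r π k h s ≤ k := by
  intro k
  induction k with
  | zero => intro h s; simp [valAux]
  | succ k ih =>
    intro h s
    rw [valAux]
    push_cast
    calc ∑ a, π.p s h a * (r h s a + ∑ s', P h s a s' * valAux P r π k (h+1) s')
        ≤ ∑ a, π.p s h a * (1 + (k : ℝ)) := by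
          refine Finset.sum_le_sum fun a _ => mul_le_mul_of_nonneg_left ?_ (π.nonneg _ _ _)
          refine add_le_add (hr _ _ _) ?_
          calc ∑ s', P h s a s' * valAux P r π k (h+1) s'
              ≤ ∑ s', P h s a s' * k := Finset.sum_le_sum fun s' _ =>
                mul_le_mul_of_nonneg_left (ih _ _) ((hP h s a).1 s')
            _ = k := by rw [← Finset.sum_mul, (hP h s a).2, one_mul]
      _ = 1 + (k : ℝ) := by rw [← Finset.sum_mul, π.sum_one, one_mul]
      _ = (k : ℝ) + 1 := by ring

noncomputable def stDist (P : ℕ → S → A → S → ℝ) (μ : S → ℝ) (π : EpiPolicy S A) :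
    ℕ → S → ℝ
  | 0 => μ
  | h + 1 => fun s' => ∑ q : S × A, occ P μ π h q * P h q.1 q.2 s'

lemma occ_eq (P : ℕ → S → A → S → ℝ) (μ : S → ℝ) (π : EpiPolicy S A) :
    ∀ h (q : S × A), occ P μ π h q = stDist P μ π h q.1 * π.p q.1 h q.2
  | 0, q => rfl
  | h + 1, q => by simp [occ, stDist, Finset.sum_mul]

lemma occ_nonneg (P : ℕ → S → A → S → ℝ) (μ : S → ℝ) (π : EpiPolicy S A)
    (hP : ∀ h s a s', 0 ≤ P h s a s') (hμ : ∀ s, 0 ≤ μ s) :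
    ∀ h q, 0 ≤ occ P μ π h q
  | 0, q => mul_nonneg (hμ _) (π.nonneg _ _ _)
  | h + 1, q => Finset.sum_nonneg fun q' _ =>
      mul_nonneg (mul_nonneg (occ_nonneg P μ π hP hμ h q') (hP _ _ _ _)) (π.nonneg _ _ _)

lemma sum_occ (P : ℕ → S → A → S → ℝ) (μ : S → ℝ) (π : EpiPolicy S A)
    (hP : ∀ h s a, ∑ s', P h s a s' = 1) (hμ : ∑ s, μ s = 1) :
    ∀ h, ∑ q : S × A, occ P μ π h q = 1 := by
  intro h
  induction h with
  | zero =>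
    rw [Fintype.sum_prod_type]
    simp only [occ, ← Finset.mul_sum, π.sum_one, mul_one]
    exact hμ
  | succ h ih =>
    rw [Fintype.sum_prod_type]
    simp only [occ, ← Finset.sum_mul]
    simp only [← Finset.mul_sum, π.sum_one, mul_one]
    rw [Finset.sum_comm]
    simp only [← Finset.mul_sum, hP, mul_one]
    exact ih

lemma step_eq (P Q : ℕ → S → A → S → ℝ) (μ : S → ℝ) (r : ℕ → S → A → ℝ)
    (π : EpiPolicy S A) (H h : ℕ) (hh : h < H) :
    (∑ s, stDist P μ π h s * valAux Q r π (H - h) h s)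
      - ∑ s, stDist P μ π (h+1) s * valAux Q r π (H - (h+1)) (h+1) s
    = ∑ q : S × A, occ P μ π h q *
        (r h q.1 q.2 + ∑ s', (Q h q.1 q.2 s' - P h q.1 q.2 s')
          * valAux Q r π (H - (h+1)) (h+1) s') := by
  have hHh : H - h = (H - (h+1)) + 1 := by omega
  rw [hHh]
  have e1 : ∑ s, stDist P μ π h s * valAux Q r π ((H-(h+1))+1) h s
      = ∑ q : S × A, occ P μ π h q * (r h q.1 q.2 +
          ∑ s', Q h q.1 q.2 s' * valAux Q r π (H-(h+1)) (h+1) s') := by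
    rw [Fintype.sum_prod_type]
    simp only [valAux, occ_eq, Finset.mul_sum]
    refine Finset.sum_congr rfl fun s _ => Finset.sum_congr rfl fun a _ => by ring
  have e2 : ∑ s', stDist P μ π (h+1) s' * valAux Q r π (H-(h+1)) (h+1) s'
      = ∑ q : S × A, occ P μ π h q *
          ∑ s', P h q.1 q.2 s' * valAux Q r π (H-(h+1)) (h+1) s' := by
    simp only [stDist, Finset.sum_mul, Finset.mul_sum]
    rw [Finset.sum_comm]
    simp only [mul_assoc]
  rw [e1, e2, ← Finset.sum_sub_distrib]
  refine Finset.sum_congr rfl fun q _ => ?_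
  simp only [sub_mul, Finset.sum_sub_distrib]
  ring

lemma tele (P Q : ℕ → S → A → S → ℝ) (μ : S → ℝ) (r : ℕ → S → A → ℝ)
    (π : EpiPolicy S A) (H : ℕ) :
    ∑ s, μ s * valAux Q r π H 0 s
      = ∑ h ∈ Finset.range H, ∑ q : S × A, occ P μ π h q *
          (r h q.1 q.2 + ∑ s', (Q h q.1 q.2 s' - P h q.1 q.2 s')
            * valAux Q r π (H-(h+1)) (h+1) s') := by
  have key := Finset.sum_range_sub'
    (fun h => ∑ s, stDist P μ π h s * valAux Q r π (H - h) h s) H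
  have h0 : (∑ s, stDist P μ π 0 s * valAux Q r π (H - 0) 0 s)
      = ∑ s, μ s * valAux Q r π H 0 s := by simp [stDist]
  have hH : (∑ s, stDist P μ π H s * valAux Q r π (H - H) H s) = 0 := by
    simp [valAux]
  rw [h0, hH, sub_zero] at key
  rw [← key]
  exact Finset.sum_congr rfl fun h hh => step_eq P Q μ r π H h (Finset.mem_range.mp hh)

end Aux

/-- **Deterministic evaluation-error bound (core of Lemma B.6).**
Assume (i) for every step `h < H` and every `(s,a)` with `sup_{π'} d_h^{π'}(s,a) ≥ δ`
one has `sup_{π'} d_h^{π'}(s,a) ≤ C·μ_h(s,a)`, and (ii) for every `h < H` and every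
`G : 𝒮 → [0,H]`, `∑_{(s,a)} μ_h(s,a)·((P̂_h − P_h)G (s,a))² ≤ B`.  Then for every
policy `π` and every reward with values in `[0,1]`:
`|Ĵ(π;r) − J(π;r)| ≤ H·√(C·B) + S·A·H²·δ`. -/


theorem deterministic_evaluation_error_bound
    (S A : Type) [Fintype S] [Fintype A]
    (H : ℕ) (P Phat : ℕ → S → A → S → ℝ) (μ : S → ℝ)
    (hP : ∀ h s a, (∀ s', 0 ≤ P h s a s') ∧ ∑ s', P h s a s' = 1)
    (hPhat : ∀ h s a, (∀ s', 0 ≤ Phat h s a s') ∧ ∑ s', Phat h s a s' = 1)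
    (hμ : (∀ s, 0 ≤ μ s) ∧ ∑ s, μ s = 1)
    (δ C B : ℝ) (hδ : 0 < δ) (hC : 0 ≤ C) (hB : 0 ≤ B)
    (μh : ℕ → S × A → ℝ)
    (hμh : ∀ h < H, (∀ q, 0 ≤ μh h q) ∧ ∑ q, μh h q = 1)
    (hsig : ∀ h < H, ∀ q : S × A,
      δ ≤ (⨆ π' : EpiPolicy S A, occ P μ π' h q) →
        (⨆ π' : EpiPolicy S A, occ P μ π' h q) ≤ C * μh h q)
    (hconc : ∀ h < H, ∀ G : S → ℝ, (∀ s, 0 ≤ G s ∧ G s ≤ H) →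
      ∑ q : S × A, μh h q *
        (∑ s', (Phat h q.1 q.2 s' - P h q.1 q.2 s') * G s') ^ 2 ≤ B) :
    ∀ (π : EpiPolicy S A) (r : ℕ → S → A → ℝ),
      (∀ h s a, r h s a ∈ Set.Icc (0 : ℝ) 1) →
      |(∑ s, μ s * valAux Phat r π H 0 s) - ∑ s, μ s * valAux P r π H 0 s| ≤
        H * Real.sqrt (C * B) +
          (Fintype.card S : ℝ) * (Fintype.card A) * H ^ 2 * δ := by
  intro π r hr
  classical
  set Δ : ℕ → S × A → ℝ := fun h q =>
    ∑ s', (Phat h q.1 q.2 s' - P h q.1 q.2 s') * valAux Phat r π (H - (h+1)) (h+1) s'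
    with hΔdef
  -- the difference equals the sum of per-step error terms
  have hdiff : (∑ s, μ s * valAux Phat r π H 0 s) - ∑ s, μ s * valAux P r π H 0 s
      = ∑ h ∈ Finset.range H, ∑ q : S × A, occ P μ π h q * Δ h q := by
    rw [tele P Phat μ r π H, tele P P μ r π H, ← Finset.sum_sub_distrib]
    refine Finset.sum_congr rfl fun h hh => ?_
    rw [← Finset.sum_sub_distrib]
    refine Finset.sum_congr rfl fun q _ => ?_
    simp only [hΔdef, sub_self, zero_mul, Finset.sum_const_zero, add_zero]
    ring
  -- basic occupancy facts
  have hoccn : ∀ (π' : EpiPolicy S A) h q, 0 ≤ occ P μ π' h q :=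
    fun π' => occ_nonneg P μ π' (fun h s a s' => (hP h s a).1 s') hμ.1
  have hocc1 : ∀ (π' : EpiPolicy S A) h, ∑ q : S × A, occ P μ π' h q = 1 :=
    fun π' => sum_occ P μ π' (fun h s a => (hP h s a).2) hμ.2
  have hoccle1 : ∀ (π' : EpiPolicy S A) h q, occ P μ π' h q ≤ 1 := by
    intro π' h q
    rw [← hocc1 π' h]
    exact Finset.single_le_sum (fun q' _ => hoccn π' h q') (Finset.mem_univ q)
  have hbdd : ∀ h (q : S × A),
      BddAbove (Set.range fun π' : EpiPolicy S A => occ P μ π' h q) := by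
    intro h q
    exact ⟨1, by rintro x ⟨π', rfl⟩; exact hoccle1 π' h q⟩
  have hle_sup : ∀ h (q : S × A),
      occ P μ π h q ≤ ⨆ π' : EpiPolicy S A, occ P μ π' h q :=
    fun h q => le_ciSup (hbdd h q) π
  -- per-step bound
  have key : ∀ h ∈ Finset.range H, |∑ q : S × A, occ P μ π h q * Δ h q|
      ≤ Real.sqrt (C * B)
        + (Fintype.card S : ℝ) * (Fintype.card A) * H * δ := by
    intro h hhm
    have hh : h < H := Finset.mem_range.mp hhm
    set G : S → ℝ := fun s => valAux Phat r π (H - (h+1)) (h+1) s with hGdef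
    have hG : ∀ s, 0 ≤ G s ∧ G s ≤ H := by
      intro s
      constructor
      · exact valAux_nonneg Phat r π (fun h s a s' => (hPhat h s a).1 s')
          (fun h s a => (hr h s a).1) _ _ s
      · refine le_trans (valAux_le Phat r π hPhat (fun h s a => (hr h s a).2) _ _ s) ?_
        exact_mod_cast Nat.cast_le.mpr (Nat.sub_le H (h+1))
    have hΔH : ∀ q : S × A, |Δ h q| ≤ H := by
      intro q
      have e : Δ h q = (∑ s', Phat h q.1 q.2 s' * G s') - ∑ s', P h q.1 q.2 s' * G s' := by
        simp [hΔdef, hGdef, sub_mul, Finset.sum_sub_distrib]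
      have b1 : ∀ (W : ℕ → S → A → S → ℝ)
          (hW : ∀ h s a, (∀ s', 0 ≤ W h s a s') ∧ ∑ s', W h s a s' = 1),
          0 ≤ ∑ s', W h q.1 q.2 s' * G s' ∧ (∑ s', W h q.1 q.2 s' * G s') ≤ H := by
        intro W hW
        constructor
        · exact Finset.sum_nonneg fun s' _ => mul_nonneg ((hW h q.1 q.2).1 s') (hG s').1
        · calc ∑ s', W h q.1 q.2 s' * G s' ≤ ∑ s', W h q.1 q.2 s' * H :=
              Finset.sum_le_sum fun s' _ =>
                mul_le_mul_of_nonneg_left (hG s').2 ((hW h q.1 q.2).1 s')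
            _ = H := by rw [← Finset.sum_mul, (hW h q.1 q.2).2, one_mul]
      obtain ⟨ha0, ha1⟩ := b1 Phat hPhat
      obtain ⟨hb0, hb1⟩ := b1 P hP
      rw [e, abs_sub_le_iff]
      constructor <;> linarith
    have habs : |∑ q : S × A, occ P μ π h q * Δ h q|
        ≤ ∑ q : S × A, occ P μ π h q * |Δ h q| := by
      refine le_trans (Finset.abs_sum_le_sum_abs _ _) ?_
      refine Finset.sum_le_sum fun q _ => ?_
      rw [abs_mul, abs_of_nonneg (hoccn π h q)]
    set big : Finset (S × A) :=
      Finset.univ.filter (fun q => δ ≤ ⨆ π' : EpiPolicy S A, occ P μ π' h q) with hbig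
    have hsplit : ∑ q : S × A, occ P μ π h q * |Δ h q|
        = (∑ q ∈ big, occ P μ π h q * |Δ h q|)
          + ∑ q ∈ bigᶜ, occ P μ π h q * |Δ h q| :=
      (Finset.sum_add_sum_compl big _).symm
    -- big part: Cauchy-Schwarz
    have hbigle : ∑ q ∈ big, occ P μ π h q * |Δ h q| ≤ Real.sqrt (C * B) := by
      have hcs := Real.sum_mul_le_sqrt_mul_sqrt big
        (fun q => Real.sqrt (occ P μ π h q))
        (fun q => Real.sqrt (occ P μ π h q) * |Δ h q|)
      have e1 : ∀ q ∈ big, Real.sqrt (occ P μ π h q)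
          * (Real.sqrt (occ P μ π h q) * |Δ h q|) = occ P μ π h q * |Δ h q| := by
        intro q _
        rw [← mul_assoc, Real.mul_self_sqrt (hoccn π h q)]
      rw [Finset.sum_congr rfl e1] at hcs
      refine le_trans hcs ?_
      have e2 : ∑ q ∈ big, Real.sqrt (occ P μ π h q) ^ 2 = ∑ q ∈ big, occ P μ π h q :=
        Finset.sum_congr rfl fun q _ => Real.sq_sqrt (hoccn π h q)
      have e3 : ∑ q ∈ big, (Real.sqrt (occ P μ π h q) * |Δ h q|) ^ 2
          = ∑ q ∈ big, occ P μ π h q * Δ h q ^ 2 := by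
        refine Finset.sum_congr rfl fun q _ => ?_
        rw [mul_pow, Real.sq_sqrt (hoccn π h q), sq_abs]
      rw [e2, e3]
      have hb1 : ∑ q ∈ big, occ P μ π h q ≤ 1 := by
        rw [← hocc1 π h]
        exact Finset.sum_le_sum_of_subset_of_nonneg (Finset.subset_univ _)
          (fun q _ _ => hoccn π h q)
      have hb2 : ∑ q ∈ big, occ P μ π h q * Δ h q ^ 2 ≤ C * B := by
        have step1 : ∑ q ∈ big, occ P μ π h q * Δ h q ^ 2
            ≤ ∑ q ∈ big, C * μh h q * Δ h q ^ 2 := by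
          refine Finset.sum_le_sum fun q hq => ?_
          have hqb : δ ≤ ⨆ π' : EpiPolicy S A, occ P μ π' h q :=
            (Finset.mem_filter.mp hq).2
          have : occ P μ π h q ≤ C * μh h q :=
            le_trans (hle_sup h q) (hsig h hh q hqb)
          exact mul_le_mul_of_nonneg_right this (sq_nonneg _)
        refine le_trans step1 ?_
        have step2 : ∑ q ∈ big, C * μh h q * Δ h q ^ 2
            ≤ ∑ q : S × A, C * μh h q * Δ h q ^ 2 :=
          Finset.sum_le_sum_of_subset_of_nonneg (Finset.subset_univ _)
            (fun q _ _ => mul_nonneg (mul_nonneg hC ((hμh h hh).1 q)) (sq_nonneg _))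
        refine le_trans step2 ?_
        have e4 : ∑ q : S × A, C * μh h q * Δ h q ^ 2
            = C * ∑ q : S × A, μh h q * Δ h q ^ 2 := by
          rw [Finset.mul_sum]; exact Finset.sum_congr rfl fun q _ => by ring
        rw [e4]
        exact mul_le_mul_of_nonneg_left (hconc h hh G hG) hC
      calc Real.sqrt (∑ q ∈ big, occ P μ π h q)
            * Real.sqrt (∑ q ∈ big, occ P μ π h q * Δ h q ^ 2)
          ≤ Real.sqrt 1 * Real.sqrt (C * B) :=
            mul_le_mul (Real.sqrt_le_sqrt hb1) (Real.sqrt_le_sqrt hb2)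
              (Real.sqrt_nonneg _) (by simp)
        _ = Real.sqrt (C * B) := by rw [Real.sqrt_one, one_mul]
    -- small part
    have hsmallle : ∑ q ∈ bigᶜ, occ P μ π h q * |Δ h q|
        ≤ (Fintype.card S : ℝ) * (Fintype.card A) * H * δ := by
      have each : ∀ q ∈ bigᶜ, occ P μ π h q * |Δ h q| ≤ δ * H := by
        intro q hq
        have : ¬ δ ≤ ⨆ π' : EpiPolicy S A, occ P μ π' h q := by
          simpa [hbig] using (Finset.mem_compl.mp hq)
        have hdδ : occ P μ π h q ≤ δ := le_trans (hle_sup h q) (le_of_lt (not_le.mp this))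
        exact mul_le_mul hdδ (hΔH q) (abs_nonneg _) (le_of_lt hδ)
      calc ∑ q ∈ bigᶜ, occ P μ π h q * |Δ h q| ≤ ∑ _q ∈ bigᶜ, δ * H :=
            Finset.sum_le_sum each
        _ = (bigᶜ.card : ℝ) * (δ * H) := by rw [Finset.sum_const, nsmul_eq_mul]
        _ ≤ ((Fintype.card S : ℝ) * (Fintype.card A)) * (δ * H) := by
            refine mul_le_mul_of_nonneg_right ?_
              (mul_nonneg (le_of_lt hδ) (Nat.cast_nonneg H))
            have := Finset.card_le_univ (bigᶜ)
            calc (bigᶜ.card : ℝ) ≤ (Fintype.card (S × A) : ℝ) := by exact_mod_cast this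
              _ = (Fintype.card S : ℝ) * (Fintype.card A) := by
                  rw [Fintype.card_prod]; push_cast; ring
        _ = (Fintype.card S : ℝ) * (Fintype.card A) * H * δ := by ring
    calc |∑ q : S × A, occ P μ π h q * Δ h q|
        ≤ ∑ q : S × A, occ P μ π h q * |Δ h q| := habs
      _ = _ := hsplit
      _ ≤ Real.sqrt (C * B) + (Fintype.card S : ℝ) * (Fintype.card A) * H * δ :=
          add_le_add hbigle hsmallle
  -- combine
  rw [hdiff]
  calc |∑ h ∈ Finset.range H, ∑ q : S × A, occ P μ π h q * Δ h q|
      ≤ ∑ h ∈ Finset.range H, |∑ q : S × A, occ P μ π h q * Δ h q| :=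
        Finset.abs_sum_le_sum_abs _ _
    _ ≤ ∑ _h ∈ Finset.range H, (Real.sqrt (C * B)
          + (Fintype.card S : ℝ) * (Fintype.card A) * H * δ) :=
        Finset.sum_le_sum key
    _ = H * (Real.sqrt (C * B)
          + (Fintype.card S : ℝ) * (Fintype.card A) * H * δ) := by
        rw [Finset.sum_const, Finset.card_range, nsmul_eq_mul]
    _ = H * Real.sqrt (C * B)
          + (Fintype.card S : ℝ) * (Fintype.card A) * H ^ 2 * δ := by ring
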